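/- (Euclidean analogue of the key inequality in Theorem 1.) Let f : ℝ^d → ℝ be μ-strongly convex (μ > 0), g : ℝ^d → ℝ convex, α > 0, λ > 0. Suppose x* minimizes G := f + α·g over ℝ^d and x^λ minimizes G^λ := f + α·g^λ over ℝ^d, where g^λ is the Moreau–Yoshida envelope of g. Then ‖x^λ − x*‖² ≤ (α/μ)·( g(x^λ) − g^λ(x^λ) ). -/

import Mathlib

open Filter Topology

/-- The Moreau–Yoshida envelope of `g` with scaling parameter `lam`:
`g^lam(x) = inf_y ( g(y) + ‖x − y‖² / (2 lam) )`. -/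
noncomputable def moreauEnv {d : ℕ} (g : EuclideanSpace ℝ (Fin d) → ℝ) (lam : ℝ)
    (x : EuclideanSpace ℝ (Fin d)) : ℝ :=
  ⨅ y : EuclideanSpace ℝ (Fin d), (g y + ‖x - y‖ ^ 2 / (2 * lam))


/-- A real-valued convex function on a Euclidean space has an affine-type minorant. -/
lemma aux_minorant {d : ℕ} (g : EuclideanSpace ℝ (Fin d) → ℝ)
    (hg : ConvexOn ℝ Set.univ g) :
    ∃ C : ℝ, 0 ≤ C ∧ ∀ y, g 0 - C * (1 + ‖y‖) ≤ g y := by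
  have hcont : Continuous g := hg.locallyLipschitz.continuous
  obtain ⟨zM, hzM, hmax⟩ := (isCompact_closedBall (0 : EuclideanSpace ℝ (Fin d)) 1).exists_isMaxOn
    ⟨0, by simp⟩ hcont.continuousOn
  set M := g zM with hM
  have hM0 : g 0 ≤ M := hmax (by simp)
  refine ⟨M - g 0, by linarith, fun y => ?_⟩
  -- lower bound on the unit ball
  have hball : ∀ z : EuclideanSpace ℝ (Fin d), ‖z‖ ≤ 1 → 2 * g 0 - M ≤ g z := by
    intro z hz
    have hneg : g (-z) ≤ M := hmax (by simpa using hz)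
    have hmid : g ((1/2 : ℝ) • z + (1/2 : ℝ) • (-z)) ≤ (1/2 : ℝ) * g z + (1/2 : ℝ) * g (-z) :=
      hg.2 (Set.mem_univ z) (Set.mem_univ (-z)) (by norm_num) (by norm_num) (by norm_num)
    have hzero : (1/2 : ℝ) • z + (1/2 : ℝ) • (-z) = 0 := by module
    rw [hzero] at hmid
    linarith
  rcases le_or_gt ‖y‖ 1 with hy | hy
  · have := hball y hy
    have hny : 0 ≤ ‖y‖ := norm_nonneg y
    nlinarith
  · set s := ‖y‖ with hs
    have hs1 : 1 < s := hy
    have hs0 : 0 < s := by linarith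
    set z : EuclideanSpace ℝ (Fin d) := (1/s : ℝ) • y with hzdef
    have hznorm : ‖z‖ ≤ 1 := by
      rw [hzdef, norm_smul]
      rw [Real.norm_eq_abs, abs_of_pos (by positivity : (0:ℝ) < 1/s), ← hs]
      rw [div_mul_eq_mul_div, one_mul, div_le_one hs0]
    have hconv : g ((1/s : ℝ) • y + (1 - 1/s : ℝ) • (0 : EuclideanSpace ℝ (Fin d))) ≤
        (1/s : ℝ) * g y + (1 - 1/s : ℝ) * g 0 :=
      hg.2 (Set.mem_univ y) (Set.mem_univ 0) (by positivity)
        (by rw [sub_nonneg]; rw [div_le_one hs0]; linarith) (by ring)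
    have hsimp : (1/s : ℝ) • y + (1 - 1/s : ℝ) • (0 : EuclideanSpace ℝ (Fin d)) = z := by
      rw [hzdef]; simp
    rw [hsimp] at hconv
    have hzlb : 2 * g 0 - M ≤ g z := hball z hznorm
    -- (1/s) g y ≥ g z - (1 - 1/s) g 0 ≥ 2 g0 - M - (1-1/s) g0
    have h1 : (2 * g 0 - M) - (1 - 1/s) * g 0 ≤ (1/s : ℝ) * g y := by linarith
    have h2 : s * ((2 * g 0 - M) - (1 - 1/s) * g 0) ≤ s * ((1/s : ℝ) * g y) := by
      exact mul_le_mul_of_nonneg_left h1 hs0.le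
    have h3 : s * ((1/s : ℝ) * g y) = g y := by field_simp
    rw [h3] at h2
    have h4 : s * ((2 * g 0 - M) - (1 - 1/s) * g 0) = g 0 - s * (M - g 0) := by
      field_simp; ring
    rw [h4] at h2
    nlinarith

/-- The set defining the Moreau envelope is bounded below. -/
lemma aux_bddBelow {d : ℕ} (g : EuclideanSpace ℝ (Fin d) → ℝ)
    (hg : ConvexOn ℝ Set.univ g) (lam : ℝ) (hlam : 0 < lam)
    (x : EuclideanSpace ℝ (Fin d)) :
    BddBelow (Set.range fun y : EuclideanSpace ℝ (Fin d) => g y + ‖x - y‖ ^ 2 / (2 * lam)) := by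
  obtain ⟨C, hC0, hC⟩ := aux_minorant g hg
  refine ⟨g 0 - C - C * ‖x‖ - lam * C ^ 2 / 2, ?_⟩
  rintro v ⟨y, rfl⟩
  have h1 := hC y
  have h2 : ‖y‖ ≤ ‖x‖ + ‖x - y‖ := by
    have := norm_sub_norm_le y x
    have h3 : ‖y - x‖ = ‖x - y‖ := norm_sub_rev y x
    linarith
  set r := ‖x - y‖ with hr
  have hr0 : 0 ≤ r := norm_nonneg _
  have key : C * r ≤ lam * C ^ 2 / 2 + r ^ 2 / (2 * lam) := by
    rw [← sub_nonneg]
    have : lam * C ^ 2 / 2 + r ^ 2 / (2 * lam) - C * r = (r - lam * C) ^ 2 / (2 * lam) := by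
      field_simp; ring
    rw [this]; positivity
  have hCy : C * ‖y‖ ≤ C * (‖x‖ + r) := mul_le_mul_of_nonneg_left h2 hC0
  nlinarith

/-- The Moreau envelope is below the function. -/
lemma aux_le {d : ℕ} (g : EuclideanSpace ℝ (Fin d) → ℝ)
    (hg : ConvexOn ℝ Set.univ g) (lam : ℝ) (hlam : 0 < lam)
    (x : EuclideanSpace ℝ (Fin d)) : moreauEnv g lam x ≤ g x := by
  have h := ciInf_le (aux_bddBelow g hg lam hlam x) x
  simpa [moreauEnv] using h

/-- Convexity inequality for the Moreau envelope. -/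
lemma aux_convex {d : ℕ} (g : EuclideanSpace ℝ (Fin d) → ℝ)
    (hg : ConvexOn ℝ Set.univ g) (lam : ℝ) (hlam : 0 < lam)
    (x₁ x₂ : EuclideanSpace ℝ (Fin d)) (t : ℝ) (ht : 0 ≤ t) (ht1 : t ≤ 1) :
    moreauEnv g lam (t • x₁ + (1 - t) • x₂) ≤
      t * moreauEnv g lam x₁ + (1 - t) * moreauEnv g lam x₂ := by
  refine le_of_forall_pos_le_add fun ε hε => ?_
  have h1 : moreauEnv g lam x₁ < moreauEnv g lam x₁ + ε := by linarith
  have h2 : moreauEnv g lam x₂ < moreauEnv g lam x₂ + ε := by linarith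
  obtain ⟨y₁, hy₁⟩ := exists_lt_of_ciInf_lt h1
  obtain ⟨y₂, hy₂⟩ := exists_lt_of_ciInf_lt h2
  have hle := ciInf_le (aux_bddBelow g hg lam hlam (t • x₁ + (1 - t) • x₂))
    (t • y₁ + (1 - t) • y₂)
  have hgc : g (t • y₁ + (1 - t) • y₂) ≤ t * g y₁ + (1 - t) * g y₂ :=
    hg.2 (Set.mem_univ y₁) (Set.mem_univ y₂) ht (by linarith) (by ring)
  have hvec : (t • x₁ + (1 - t) • x₂) - (t • y₁ + (1 - t) • y₂)
      = t • (x₁ - y₁) + (1 - t) • (x₂ - y₂) := by module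
  have hnorm : ‖(t • x₁ + (1 - t) • x₂) - (t • y₁ + (1 - t) • y₂)‖ ^ 2
      ≤ t * ‖x₁ - y₁‖ ^ 2 + (1 - t) * ‖x₂ - y₂‖ ^ 2 := by
    rw [hvec]
    have ha : ‖t • (x₁ - y₁) + (1 - t) • (x₂ - y₂)‖ ≤ t * ‖x₁ - y₁‖ + (1 - t) * ‖x₂ - y₂‖ := by
      calc ‖t • (x₁ - y₁) + (1 - t) • (x₂ - y₂)‖
          ≤ ‖t • (x₁ - y₁)‖ + ‖(1 - t) • (x₂ - y₂)‖ := norm_add_le _ _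
        _ = t * ‖x₁ - y₁‖ + (1 - t) * ‖x₂ - y₂‖ := by
            rw [norm_smul, norm_smul, Real.norm_eq_abs, Real.norm_eq_abs,
              abs_of_nonneg ht, abs_of_nonneg (by linarith : (0:ℝ) ≤ 1 - t)]
    have hb : (0:ℝ) ≤ ‖t • (x₁ - y₁) + (1 - t) • (x₂ - y₂)‖ := norm_nonneg _
    nlinarith [mul_self_le_mul_self hb ha,
      mul_nonneg (mul_nonneg ht (by linarith : (0:ℝ) ≤ 1 - t))
        (sq_nonneg (‖x₁ - y₁‖ - ‖x₂ - y₂‖)),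
      norm_nonneg (x₁ - y₁), norm_nonneg (x₂ - y₂)]
  calc moreauEnv g lam (t • x₁ + (1 - t) • x₂)
      ≤ g (t • y₁ + (1 - t) • y₂)
        + ‖(t • x₁ + (1 - t) • x₂) - (t • y₁ + (1 - t) • y₂)‖ ^ 2 / (2 * lam) := hle
    _ ≤ (t * g y₁ + (1 - t) * g y₂)
        + (t * ‖x₁ - y₁‖ ^ 2 + (1 - t) * ‖x₂ - y₂‖ ^ 2) / (2 * lam) := by
          exact add_le_add hgc
            ((div_le_div_iff_of_pos_right (by linarith : (0:ℝ) < 2 * lam)).mpr hnorm)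
    _ = t * (g y₁ + ‖x₁ - y₁‖ ^ 2 / (2 * lam)) + (1 - t) * (g y₂ + ‖x₂ - y₂‖ ^ 2 / (2 * lam)) := by
          field_simp; ring
    _ ≤ t * (moreauEnv g lam x₁ + ε) + (1 - t) * (moreauEnv g lam x₂ + ε) := by
          have := hy₁.le; have := hy₂.le
          have h1t : (0:ℝ) ≤ 1 - t := by linarith
          nlinarith [mul_le_mul_of_nonneg_left hy₁.le ht,
            mul_le_mul_of_nonneg_left hy₂.le h1t]
    _ = t * moreauEnv g lam x₁ + (1 - t) * moreauEnv g lam x₂ + ε := by ring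

/-- Strong-convexity minimizer inequality. -/
lemma aux_strong_min {d : ℕ} (F : EuclideanSpace ℝ (Fin d) → ℝ) (μ : ℝ)
    (hF : ∀ y z : EuclideanSpace ℝ (Fin d), ∀ t : ℝ, 0 ≤ t → t ≤ 1 →
      F (t • y + (1 - t) • z) ≤ t * F y + (1 - t) * F z - μ / 2 * (t * (1 - t) * ‖y - z‖ ^ 2))
    (xm : EuclideanSpace ℝ (Fin d)) (hmin : ∀ y, F xm ≤ F y)
    (y : EuclideanSpace ℝ (Fin d)) :
    F xm + μ / 2 * ‖y - xm‖ ^ 2 ≤ F y := by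
  set c := ‖y - xm‖ ^ 2 with hc
  set D := F y - F xm with hD
  have key : ∀ t : ℝ, 0 < t → t ≤ 1 → μ / 2 * ((1 - t) * c) ≤ D := by
    intro t ht ht1
    have h1 := hF y xm t ht.le ht1
    have h2 := hmin (t • y + (1 - t) • xm)
    have h3 : t * (μ / 2 * ((1 - t) * c)) ≤ t * D := by
      rw [hD, hc]; nlinarith [h1, h2]
    exact le_of_mul_le_mul_left h3 ht
  have ht : Filter.Tendsto (fun n : ℕ => μ / 2 * ((1 - 1 / (n + 1)) * c)) Filter.atTop
      (nhds (μ / 2 * ((1 - 0) * c))) := by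
    apply Filter.Tendsto.const_mul
    apply Filter.Tendsto.mul_const
    exact (tendsto_const_nhds.sub tendsto_one_div_add_atTop_nhds_zero_nat)
  have hev : ∀ n : ℕ, μ / 2 * ((1 - 1 / (n + 1 : ℝ)) * c) ≤ D := by
    intro n
    apply key
    · positivity
    · rw [div_le_one (by positivity)]
      have : (0:ℝ) ≤ (n:ℝ) := Nat.cast_nonneg n
      linarith
  have := le_of_tendsto' ht hev
  simp only [sub_zero, one_mul] at this
  rw [hD] at this
  linarith

theorem moreau_approx_minimizer_bound {d : ℕ}
    (f g : EuclideanSpace ℝ (Fin d) → ℝ) (μ α lam : ℝ)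
    (hμ : 0 < μ) (hα : 0 < α) (hlam : 0 < lam)
    (hf : ∀ y z : EuclideanSpace ℝ (Fin d), ∀ t : ℝ, 0 ≤ t → t ≤ 1 →
      f (t • y + (1 - t) • z) ≤
        t * f y + (1 - t) * f z - μ / 2 * (t * (1 - t) * ‖y - z‖ ^ 2))
    (hg : ConvexOn ℝ Set.univ g)
    (xstar xlam : EuclideanSpace ℝ (Fin d))
    (hxstar : ∀ y : EuclideanSpace ℝ (Fin d), f xstar + α * g xstar ≤ f y + α * g y)
    (hxlam : ∀ y : EuclideanSpace ℝ (Fin d),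
      f xlam + α * moreauEnv g lam xlam ≤ f y + α * moreauEnv g lam y) :
    ‖xlam - xstar‖ ^ 2 ≤ (α / μ) * (g xlam - moreauEnv g lam xlam) := by
  set G : EuclideanSpace ℝ (Fin d) → ℝ := fun y => f y + α * g y with hG
  set Gl : EuclideanSpace ℝ (Fin d) → ℝ := fun y => f y + α * moreauEnv g lam y with hGl
  have hGconv : ∀ y z : EuclideanSpace ℝ (Fin d), ∀ t : ℝ, 0 ≤ t → t ≤ 1 →
      G (t • y + (1 - t) • z) ≤ t * G y + (1 - t) * G z - μ / 2 * (t * (1 - t) * ‖y - z‖ ^ 2) := by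
    intro y z t ht ht1
    have h1 := hf y z t ht ht1
    have h2 : g (t • y + (1 - t) • z) ≤ t * g y + (1 - t) * g z :=
      hg.2 (Set.mem_univ y) (Set.mem_univ z) ht (by linarith) (by ring)
    simp only [hG]
    nlinarith
  have hGlconv : ∀ y z : EuclideanSpace ℝ (Fin d), ∀ t : ℝ, 0 ≤ t → t ≤ 1 →
      Gl (t • y + (1 - t) • z) ≤ t * Gl y + (1 - t) * Gl z
        - μ / 2 * (t * (1 - t) * ‖y - z‖ ^ 2) := by
    intro y z t ht ht1
    have h1 := hf y z t ht ht1
    have h2 := aux_convex g hg lam hlam y z t ht ht1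
    simp only [hGl]
    nlinarith
  have hs1 : G xstar + μ / 2 * ‖xlam - xstar‖ ^ 2 ≤ G xlam :=
    aux_strong_min G μ hGconv xstar hxstar xlam
  have hs2 : Gl xlam + μ / 2 * ‖xstar - xlam‖ ^ 2 ≤ Gl xstar :=
    aux_strong_min Gl μ hGlconv xlam hxlam xstar
  have hrev : ‖xstar - xlam‖ = ‖xlam - xstar‖ := norm_sub_rev _ _
  rw [hrev] at hs2
  have hle := aux_le g hg lam hlam xstar
  simp only [hG, hGl] at hs1 hs2
  rw [div_mul_eq_mul_div, le_div_iff₀ hμ]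
  nlinarith
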